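/- There exists a constant K > 0 such that for all ν with 0 < ν ≤ 1/2, [log((ν^{−ν} − 1)^{1/2} + ν^{−ν/2})/(1 − ν)]² ≤ K·ν·log(1/ν). -/
import Mathlib


theorem stmt14 :
    ∃ K > (0 : ℝ), ∀ ν : ℝ, 0 < ν → ν ≤ 1 / 2 →
      (Real.log ((ν ^ (-ν) - 1) ^ ((1 : ℝ) / 2) + ν ^ (-(ν / 2))) / (1 - ν)) ^ 2
        ≤ K * ν * Real.log (1 / ν) := by
  refine ⟨10, by norm_num, ?_⟩
  intro ν hν hν2
  set L := Real.log (1 / ν) with hL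
  have hLν : L = -Real.log ν := by
    rw [hL, Real.log_div one_ne_zero (ne_of_gt hν), Real.log_one]; ring
  have hL0 : 0 ≤ L := Real.log_nonneg (by rw [le_div_iff₀ hν]; linarith)
  set t := ν * L with ht
  have ht0 : 0 ≤ t := mul_nonneg hν.le hL0
  have ht1 : t ≤ 1 := by
    have h := Real.log_le_sub_one_of_pos (show (0:ℝ) < 1 / ν by positivity)
    have : ν * L ≤ ν * (1 / ν - 1) := mul_le_mul_of_nonneg_left h hν.le
    have hne : ν ≠ 0 := ne_of_gt hν
    rw [mul_sub, mul_one_div, div_self hne] at this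
    linarith
  have hνν : ν ^ (-ν) = Real.exp t := by
    rw [Real.rpow_def_of_pos hν]
    congr 1
    rw [ht, hLν]; ring
  have hνν2 : ν ^ (-(ν / 2)) = Real.exp (t / 2) := by
    rw [Real.rpow_def_of_pos hν]
    congr 1
    rw [ht, hLν]; ring
  have hexp1 : (1 : ℝ) ≤ Real.exp t := by
    rw [← Real.exp_zero]; exact Real.exp_le_exp.mpr ht0
  -- key: exp t - 1 ≤ t * exp t
  have hkey : Real.exp t - 1 ≤ t * Real.exp t := by
    have h1 := Real.add_one_le_exp (-t)
    have h2 : Real.exp (-t) * Real.exp t = 1 := by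
      rw [← Real.exp_add]; simp
    nlinarith [Real.exp_pos t]
  set s := t ^ ((1:ℝ)/2) with hs
  have hs0 : 0 ≤ s := Real.rpow_nonneg ht0 _
  have hs1 : s ≤ 1 := Real.rpow_le_one ht0 ht1 (by norm_num)
  have hs2 : s ^ 2 = t := by
    rw [hs, ← Real.rpow_natCast (t ^ ((1:ℝ)/2)) 2, ← Real.rpow_mul ht0]
    norm_num
  have hsqrt : (Real.exp t - 1) ^ ((1:ℝ)/2) ≤ s * Real.exp (t / 2) := by
    have h1 : (Real.exp t - 1) ^ ((1:ℝ)/2) ≤ (t * Real.exp t) ^ ((1:ℝ)/2) :=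
      Real.rpow_le_rpow (by linarith) hkey (by norm_num)
    have h2 : (t * Real.exp t) ^ ((1:ℝ)/2) = s * Real.exp (t / 2) := by
      rw [Real.mul_rpow ht0 (Real.exp_pos t).le, hs]
      congr 1
      rw [Real.rpow_def_of_pos (Real.exp_pos t), Real.log_exp]
      congr 1; ring
    linarith [h1, h2.le, h2.ge]
  have hrpow0 : 0 ≤ (Real.exp t - 1) ^ ((1:ℝ)/2) := Real.rpow_nonneg (by linarith) _
  have hexp2 : (1 : ℝ) ≤ Real.exp (t / 2) := by
    rw [← Real.exp_zero]; exact Real.exp_le_exp.mpr (by linarith)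
  have hpos : 0 < (Real.exp t - 1) ^ ((1:ℝ)/2) + Real.exp (t / 2) := by
    linarith
  set x := Real.log ((ν ^ (-ν) - 1) ^ ((1:ℝ)/2) + ν ^ (-(ν / 2))) with hx
  have hxeq : x = Real.log ((Real.exp t - 1) ^ ((1:ℝ)/2) + Real.exp (t / 2)) := by
    rw [hx, hνν, hνν2]
  have hx0 : 0 ≤ x := by
    rw [hxeq]
    exact Real.log_nonneg (by linarith)
  have hxle : x ≤ s + t / 2 := by
    rw [hxeq]
    rw [Real.log_le_iff_le_exp hpos]
    have h3 : (1 + s) * Real.exp (t / 2) ≤ Real.exp s * Real.exp (t / 2) :=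
      mul_le_mul_of_nonneg_right (by linarith [Real.add_one_le_exp s]) (Real.exp_pos _).le
    rw [← Real.exp_add] at h3
    nlinarith [Real.exp_pos (t / 2)]
  clear_value L t s x
  have hden : (1 : ℝ) / 2 ≤ 1 - ν := by linarith
  have hdenpos : (0 : ℝ) < 1 - ν := by linarith
  have hdiv : x / (1 - ν) ≤ 2 * x := by
    rw [div_le_iff₀ hdenpos]
    nlinarith [hx0, hden]
  have hdiv0 : 0 ≤ x / (1 - ν) := div_nonneg hx0 hdenpos.le
  have hsq : (x / (1 - ν)) ^ 2 ≤ (2 * x) ^ 2 := pow_le_pow_left₀ hdiv0 hdiv 2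
  have h1 : x ^ 2 ≤ (s + t / 2) ^ 2 := pow_le_pow_left₀ hx0 hxle 2
  have hst : s * t ≤ t := mul_le_of_le_one_left ht0 hs1
  have htt : t * t ≤ t := mul_le_of_le_one_left ht0 ht1
  have hring : (s + t / 2) ^ 2 = s ^ 2 + s * t + t * t / 4 := by ring
  have hfin : (2 * x) ^ 2 ≤ 10 * t := by
    have h4 : (2 * x) ^ 2 = 4 * x ^ 2 := by ring
    rw [h4]
    rw [hring, hs2] at h1
    linarith
  calc (x / (1 - ν)) ^ 2 ≤ (2 * x) ^ 2 := hsq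
    _ ≤ 10 * t := hfin
    _ = 10 * ν * L := by rw [ht]; ring
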